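/- For all natural numbers n ≥ 1, the polynomials P_n(x) := ∑_{i=0}^{n} binomial(2n, n-i)·x^i over ℚ satisfy the recursion x·P_{n+1}(x) = (x+1)^2·P_n(x) + (x-1)·binomial(2n, n) − (x/(n+1))·binomial(2n, n). -/

import Mathlib

open Polynomial

noncomputable def Ppoly (n : ℕ) : Polynomial ℚ :=
  ∑ i ∈ Finset.range (n + 1), C (Nat.choose (2 * n) (n - i) : ℚ) * X ^ i

lemma coeff_Ppoly (n k : ℕ) :
    (Ppoly n).coeff k = if k ≤ n then (Nat.choose (2*n) (n-k) : ℚ) else 0 := by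
  simp [Ppoly, Polynomial.finset_sum_coeff, Polynomial.coeff_C_mul, Polynomial.coeff_X_pow,
    Finset.sum_ite_eq, Nat.lt_succ_iff]

lemma pascal2 (m j : ℕ) :
    ((m+2).choose (j+2) : ℚ) = m.choose (j+2) + 2*(m.choose (j+1)) + m.choose j := by
  have : (m+2).choose (j+2) = m.choose (j+2) + 2*(m.choose (j+1)) + m.choose j := by
    simp [Nat.choose_succ_succ]; ring
  exact_mod_cast congrArg (Nat.cast (R := ℚ)) this

lemma keyB (m : ℕ) :
    ((2*(m+1)).choose (m+1) : ℚ) * (m+1) = (2*(m+1)).choose m * (m+2) := by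
  have h := Nat.choose_succ_right_eq (2*(m+1)) m
  rw [show 2*(m+1) - m = m + 2 by omega] at h
  exact_mod_cast congrArg (Nat.cast (R := ℚ)) h

lemma keysym (m : ℕ) : (2*(m+1)).choose (m+2) = (2*(m+1)).choose m := by
  rw [← Nat.choose_symm (show m+2 ≤ 2*(m+1) by omega)]
  congr 1; omega

lemma Ppoly_key (n : ℕ) (hn : 1 ≤ n) :
    (((n:ℚ)+1) • Ppoly (n+1)) * X = (((n:ℚ)+1) • Ppoly n) * X^2
      + (2*((n:ℚ)+1)) • (Ppoly n * X) + ((n:ℚ)+1) • Ppoly n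
      + ((n:ℚ)*((2*n).choose n : ℚ)) • (X:Polynomial ℚ)
      - C (((n:ℚ)+1)*((2*n).choose n : ℚ)) := by
  ext k
  have h2 : ∀ (p : Polynomial ℚ) (d : ℕ), (p * X^2).coeff d = if 2 ≤ d then p.coeff (d-2) else 0 :=
    fun p d => Polynomial.coeff_mul_X_pow' p 2 d
  match k with
  | 0 =>
    simp only [coeff_sub, coeff_add, coeff_smul, mul_coeff_zero, coeff_X_zero, coeff_C,
      mul_zero, zero_mul, smul_eq_mul, if_pos rfl, h2, coeff_Ppoly]
    norm_num
  | 1 =>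
    simp only [coeff_sub, coeff_add, coeff_smul, coeff_mul_X, coeff_X_one, coeff_C,
      smul_eq_mul, h2, coeff_Ppoly]
    norm_num
    rw [if_pos hn]
    obtain ⟨m, rfl⟩ : ∃ m, n = m + 1 := ⟨n - 1, by omega⟩
    rw [show 2*(m+1+1) = 2*(m+1)+2 by ring, show m+1+1 = m+2 by ring,
      show m+1-1 = m by omega]
    have hA := pascal2 (2*(m+1)) m
    rw [keysym m] at hA
    have hB := keyB m
    push_cast
    linear_combination ((m:ℚ)+2) * hA - hB
  | (k+2) =>
    simp only [coeff_sub, coeff_add, coeff_smul, coeff_mul_X, coeff_X, coeff_C,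
      smul_eq_mul, h2, coeff_Ppoly]
    norm_num
    by_cases hc3 : k + 2 ≤ n
    · rw [if_pos (show k ≤ n by omega), if_pos (show k ≤ n by omega),
        if_pos (show k < n by omega), if_pos hc3]
      obtain ⟨j, rfl⟩ : ∃ j, n = k + j + 2 := ⟨n - k - 2, by omega⟩
      rw [show 2*(k+j+2+1) = 2*(k+j+2)+2 by ring,
        show k+j+2+1-(k+1) = j+2 by omega, show k+j+2-k = j+2 by omega,
        show k+j+2-(k+1) = j+1 by omega, show k+j+2-(k+2) = j by omega]
      have hA := pascal2 (2*(k+j+2)) j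
      push_cast at hA ⊢
      linear_combination ((k:ℚ)+(j:ℚ)+3) * hA
    · by_cases hc2 : k + 1 ≤ n
      · obtain rfl : n = k + 1 := by omega
        rw [if_pos (show k ≤ k+1 by omega), if_pos (show k ≤ k+1 by omega),
          if_pos (show k < k+1 by omega), if_neg hc3]
        rw [show 2*(k+1+1) = 2*(k+1)+2 by ring, show k+1+1-(k+1) = 1 by omega,
          show k+1-k = 1 by omega, show k+1-(k+1) = 0 by omega]
        simp [Nat.choose_one_right]
        ring
      · by_cases hc1 : k ≤ n
        · rw [if_pos hc1, if_pos hc1, if_neg (show ¬ k < n by omega), if_neg hc3]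
          rw [show n+1-(k+1) = 0 by omega, show n-k = 0 by omega]
          simp
        · rw [if_neg hc1, if_neg hc1, if_neg (show ¬ k < n by omega), if_neg hc3]
          ring

theorem Ppoly_recursion (n : ℕ) (hn : 1 ≤ n) :
    (C ((n : ℚ) + 1)) * X * Ppoly (n + 1) =
      (C ((n : ℚ) + 1)) * (X + 1) ^ 2 * Ppoly n +
        (C ((n : ℚ) + 1)) * (X - 1) * C (Nat.choose (2 * n) n : ℚ) -
          X * C (Nat.choose (2 * n) n : ℚ) := by
  have key := Ppoly_key n hn
  simp only [smul_eq_C_mul, map_mul, map_add, map_one, map_ofNat, map_natCast] at key ⊢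
  linear_combination key
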